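/- For every r ≥ 3, there exists a connected graph of order 3r+1 with monophonic position number 2 and general position number 2r. -/

import Mathlib

open SimpleGraph

/-- A walk is an *induced (monophonic) path* if it is a path and vertices on the
walk are adjacent in `G` exactly when they are consecutive on the walk. -/
def IsInducedPathW {V : Type*} (G : SimpleGraph V) {u v : V} (p : G.Walk u v) : Prop :=
  p.IsPath ∧ ∀ a b : V, a ∈ p.support → b ∈ p.support → (G.Adj a b ↔ p.toSubgraph.Adj a b)

/-- A walk is a *geodesic* if it is a shortest path between its endpoints. -/
def IsGeodesicW {V : Type*} (G : SimpleGraph V) {u v : V} (p : G.Walk u v) : Prop :=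
  p.IsPath ∧ p.length = G.dist u v

/-- A set of vertices is in *monophonic position* if no induced path of `G`
contains more than two of its vertices. -/
def IsMpSet {V : Type*} (G : SimpleGraph V) (S : Set V) : Prop :=
  ∀ ⦃u v : V⦄ (p : G.Walk u v), IsInducedPathW G p → (S ∩ {x | x ∈ p.support}).ncard ≤ 2

/-- A set of vertices is in *general position* if no geodesic of `G` contains
more than two of its vertices. -/
def IsGpSet {V : Type*} (G : SimpleGraph V) (S : Set V) : Prop :=
  ∀ ⦃u v : V⦄ (p : G.Walk u v), IsGeodesicW G p → (S ∩ {x | x ∈ p.support}).ncard ≤ 2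

/-- The monophonic position number `mp(G)`. -/
noncomputable def mpNum {V : Type*} (G : SimpleGraph V) : ℕ :=
  sSup {n | ∃ S : Set V, IsMpSet G S ∧ S.ncard = n}

/-- The general position number `gp(G)`. -/
noncomputable def gpNum {V : Type*} (G : SimpleGraph V) : ℕ :=
  sSup {n | ∃ S : Set V, IsGpSet G S ∧ S.ncard = n}

variable {V : Type*} {G : SimpleGraph V}

lemma toSubgraph_adj_iff_edges {u v : V} (p : G.Walk u v) (a b : V) :
    p.toSubgraph.Adj a b ↔ s(a, b) ∈ p.edges := by
  induction p with
  | nil => simp [Walk.toSubgraph]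
  | @cons x y z h q ih =>
    simp [Walk.toSubgraph, Subgraph.sup_adj, ih, Sym2.eq, Sym2.rel_iff',
      Prod.mk.injEq, Prod.swap_prod_mk]
    tauto

lemma mkP3 {v0 v1 v2 : V} (h01 : G.Adj v0 v1) (h12 : G.Adj v1 v2)
    (n02 : ¬G.Adj v0 v2) (d02 : v0 ≠ v2) :
    ∃ p : G.Walk v0 v2, IsInducedPathW G p ∧ p.support = [v0, v1, v2] := by
  refine ⟨.cons h01 (.cons h12 .nil), ⟨?_, ?_⟩, by simp⟩
  · rw [Walk.isPath_def]
    simp [h01.ne, h12.ne, d02]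
  · intro a b ha hb
    rw [toSubgraph_adj_iff_edges]
    simp only [Walk.support_cons, Walk.support_nil, List.mem_cons,
      List.not_mem_nil, or_false] at ha hb
    have n20 : ¬G.Adj v2 v0 := fun h => n02 h.symm
    simp only [Walk.edges_cons, Walk.edges_nil, List.mem_cons, List.not_mem_nil, or_false,
      Sym2.eq, Sym2.rel_iff', Prod.mk.injEq, Prod.swap_prod_mk]
    have d01 := h01.ne; have d12 := h12.ne
    have d10 := d01.symm; have d21 := d12.symm; have d20 := d02.symm
    have h10 := h01.symm; have h21 := h12.symm
    have l0 := G.loopless.irrefl v0; have l1 := G.loopless.irrefl v1; have l2 := G.loopless.irrefl v2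
    rcases ha with rfl | rfl | rfl <;> rcases hb with rfl | rfl | rfl <;>
      constructor <;> intro h <;> tauto


lemma mkP4 {v0 v1 v2 v3 : V} (h01 : G.Adj v0 v1) (h12 : G.Adj v1 v2) (h23 : G.Adj v2 v3)
    (n02 : ¬G.Adj v0 v2) (n03 : ¬G.Adj v0 v3) (n13 : ¬G.Adj v1 v3)
    (d02 : v0 ≠ v2) (d03 : v0 ≠ v3) (d13 : v1 ≠ v3) :
    ∃ p : G.Walk v0 v3, IsInducedPathW G p ∧ p.support = [v0, v1, v2, v3] := by
  refine ⟨.cons h01 (.cons h12 (.cons h23 .nil)), ⟨?_, ?_⟩, by simp⟩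
  · rw [Walk.isPath_def]
    simp [h01.ne, h12.ne, h23.ne, d02, d03, d13]
  · refine fun a b ha hb => ⟨fun h => ?_, fun h => Subgraph.adj_sub _ h⟩
    rw [toSubgraph_adj_iff_edges]
    simp only [Walk.support_cons, Walk.support_nil, List.mem_cons,
      List.not_mem_nil, or_false] at ha hb
    have n20 : ¬G.Adj v2 v0 := fun h => n02 h.symm
    have n30 : ¬G.Adj v3 v0 := fun h => n03 h.symm
    have n31 : ¬G.Adj v3 v1 := fun h => n13 h.symm
    have l0 := G.loopless.irrefl v0; have l1 := G.loopless.irrefl v1; have l2 := G.loopless.irrefl v2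
    have l3 := G.loopless.irrefl v3
    rcases ha with rfl | rfl | rfl | rfl <;> rcases hb with rfl | rfl | rfl | rfl <;> simp_all

lemma mkP5 {v0 v1 v2 v3 v4 : V}
    (h01 : G.Adj v0 v1) (h12 : G.Adj v1 v2) (h23 : G.Adj v2 v3) (h34 : G.Adj v3 v4)
    (n02 : ¬G.Adj v0 v2) (n03 : ¬G.Adj v0 v3) (n04 : ¬G.Adj v0 v4)
    (n13 : ¬G.Adj v1 v3) (n14 : ¬G.Adj v1 v4) (n24 : ¬G.Adj v2 v4)
    (d02 : v0 ≠ v2) (d03 : v0 ≠ v3) (d04 : v0 ≠ v4)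
    (d13 : v1 ≠ v3) (d14 : v1 ≠ v4) (d24 : v2 ≠ v4) :
    ∃ p : G.Walk v0 v4, IsInducedPathW G p ∧ p.support = [v0, v1, v2, v3, v4] := by
  refine ⟨.cons h01 (.cons h12 (.cons h23 (.cons h34 .nil))), ⟨?_, ?_⟩, by simp⟩
  · rw [Walk.isPath_def]
    simp [h01.ne, h12.ne, h23.ne, h34.ne, d02, d03, d04, d13, d14, d24]
  · refine fun a b ha hb => ⟨fun h => ?_, fun h => Subgraph.adj_sub _ h⟩
    rw [toSubgraph_adj_iff_edges]
    simp only [Walk.support_cons, Walk.support_nil, List.mem_cons,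
      List.not_mem_nil, or_false] at ha hb
    have n20 : ¬G.Adj v2 v0 := fun h => n02 h.symm
    have n30 : ¬G.Adj v3 v0 := fun h => n03 h.symm
    have n40 : ¬G.Adj v4 v0 := fun h => n04 h.symm
    have n31 : ¬G.Adj v3 v1 := fun h => n13 h.symm
    have n41 : ¬G.Adj v4 v1 := fun h => n14 h.symm
    have n42 : ¬G.Adj v4 v2 := fun h => n24 h.symm
    have l0 := G.loopless.irrefl v0; have l1 := G.loopless.irrefl v1; have l2 := G.loopless.irrefl v2
    have l3 := G.loopless.irrefl v3; have l4 := G.loopless.irrefl v4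
    rcases ha with rfl | rfl | rfl | rfl | rfl <;>
      rcases hb with rfl | rfl | rfl | rfl | rfl <;> simp_all

lemma mkP6 {v0 v1 v2 v3 v4 v5 : V}
    (h01 : G.Adj v0 v1) (h12 : G.Adj v1 v2) (h23 : G.Adj v2 v3)
    (h34 : G.Adj v3 v4) (h45 : G.Adj v4 v5) (n02 : ¬G.Adj v0 v2)
    (n03 : ¬G.Adj v0 v3) (n04 : ¬G.Adj v0 v4) (n05 : ¬G.Adj v0 v5)
    (n13 : ¬G.Adj v1 v3) (n14 : ¬G.Adj v1 v4) (n15 : ¬G.Adj v1 v5)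
    (n24 : ¬G.Adj v2 v4) (n25 : ¬G.Adj v2 v5) (n35 : ¬G.Adj v3 v5)
    (d02 : v0 ≠ v2) (d03 : v0 ≠ v3) (d04 : v0 ≠ v4)
    (d05 : v0 ≠ v5) (d13 : v1 ≠ v3) (d14 : v1 ≠ v4)
    (d15 : v1 ≠ v5) (d24 : v2 ≠ v4) (d25 : v2 ≠ v5)
    (d35 : v3 ≠ v5)
    : ∃ p : G.Walk v0 v5, IsInducedPathW G p ∧ p.support = [v0, v1, v2, v3, v4, v5] := by
  refine ⟨(.cons h01 (.cons h12 (.cons h23 (.cons h34 (.cons h45 .nil))))), ⟨?_, ?_⟩, by simp⟩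
  · rw [Walk.isPath_def]
    simp [h01.ne, h12.ne, h23.ne, h34.ne, h45.ne, d02, d03, d04, d05, d13, d14, d15, d24, d25, d35]
  · refine fun a b ha hb => ⟨fun h => ?_, fun h => Subgraph.adj_sub _ h⟩
    rw [toSubgraph_adj_iff_edges]
    simp only [Walk.support_cons, Walk.support_nil, List.mem_cons,
      List.not_mem_nil, or_false] at ha hb
    have n20 : ¬G.Adj v2 v0 := fun h => n02 h.symm
    have n30 : ¬G.Adj v3 v0 := fun h => n03 h.symm
    have n40 : ¬G.Adj v4 v0 := fun h => n04 h.symm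
    have n50 : ¬G.Adj v5 v0 := fun h => n05 h.symm
    have n31 : ¬G.Adj v3 v1 := fun h => n13 h.symm
    have n41 : ¬G.Adj v4 v1 := fun h => n14 h.symm
    have n51 : ¬G.Adj v5 v1 := fun h => n15 h.symm
    have n42 : ¬G.Adj v4 v2 := fun h => n24 h.symm
    have n52 : ¬G.Adj v5 v2 := fun h => n25 h.symm
    have n53 : ¬G.Adj v5 v3 := fun h => n35 h.symm
    have l0 := G.loopless.irrefl v0
    have l1 := G.loopless.irrefl v1
    have l2 := G.loopless.irrefl v2
    have l3 := G.loopless.irrefl v3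
    have l4 := G.loopless.irrefl v4
    have l5 := G.loopless.irrefl v5
    rcases ha with rfl | rfl | rfl | rfl | rfl | rfl <;>
      rcases hb with rfl | rfl | rfl | rfl | rfl | rfl <;> simp_all

lemma mkP7 {v0 v1 v2 v3 v4 v5 v6 : V}
    (h01 : G.Adj v0 v1) (h12 : G.Adj v1 v2) (h23 : G.Adj v2 v3)
    (h34 : G.Adj v3 v4) (h45 : G.Adj v4 v5) (h56 : G.Adj v5 v6)
    (n02 : ¬G.Adj v0 v2) (n03 : ¬G.Adj v0 v3) (n04 : ¬G.Adj v0 v4)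
    (n05 : ¬G.Adj v0 v5) (n06 : ¬G.Adj v0 v6) (n13 : ¬G.Adj v1 v3)
    (n14 : ¬G.Adj v1 v4) (n15 : ¬G.Adj v1 v5) (n16 : ¬G.Adj v1 v6)
    (n24 : ¬G.Adj v2 v4) (n25 : ¬G.Adj v2 v5) (n26 : ¬G.Adj v2 v6)
    (n35 : ¬G.Adj v3 v5) (n36 : ¬G.Adj v3 v6) (n46 : ¬G.Adj v4 v6)
    (d02 : v0 ≠ v2) (d03 : v0 ≠ v3) (d04 : v0 ≠ v4)
    (d05 : v0 ≠ v5) (d06 : v0 ≠ v6) (d13 : v1 ≠ v3)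
    (d14 : v1 ≠ v4) (d15 : v1 ≠ v5) (d16 : v1 ≠ v6)
    (d24 : v2 ≠ v4) (d25 : v2 ≠ v5) (d26 : v2 ≠ v6)
    (d35 : v3 ≠ v5) (d36 : v3 ≠ v6) (d46 : v4 ≠ v6)
    : ∃ p : G.Walk v0 v6, IsInducedPathW G p ∧ p.support = [v0, v1, v2, v3, v4, v5, v6] := by
  refine ⟨(.cons h01 (.cons h12 (.cons h23 (.cons h34 (.cons h45 (.cons h56 .nil)))))), ⟨?_, ?_⟩, by simp⟩
  · rw [Walk.isPath_def]
    simp [h01.ne, h12.ne, h23.ne, h34.ne, h45.ne, h56.ne, d02, d03, d04, d05, d06, d13, d14, d15, d16, d24, d25, d26, d35, d36, d46]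
  · refine fun a b ha hb => ⟨fun h => ?_, fun h => Subgraph.adj_sub _ h⟩
    rw [toSubgraph_adj_iff_edges]
    simp only [Walk.support_cons, Walk.support_nil, List.mem_cons,
      List.not_mem_nil, or_false] at ha hb
    have n20 : ¬G.Adj v2 v0 := fun h => n02 h.symm
    have n30 : ¬G.Adj v3 v0 := fun h => n03 h.symm
    have n40 : ¬G.Adj v4 v0 := fun h => n04 h.symm
    have n50 : ¬G.Adj v5 v0 := fun h => n05 h.symm
    have n60 : ¬G.Adj v6 v0 := fun h => n06 h.symm
    have n31 : ¬G.Adj v3 v1 := fun h => n13 h.symm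
    have n41 : ¬G.Adj v4 v1 := fun h => n14 h.symm
    have n51 : ¬G.Adj v5 v1 := fun h => n15 h.symm
    have n61 : ¬G.Adj v6 v1 := fun h => n16 h.symm
    have n42 : ¬G.Adj v4 v2 := fun h => n24 h.symm
    have n52 : ¬G.Adj v5 v2 := fun h => n25 h.symm
    have n62 : ¬G.Adj v6 v2 := fun h => n26 h.symm
    have n53 : ¬G.Adj v5 v3 := fun h => n35 h.symm
    have n63 : ¬G.Adj v6 v3 := fun h => n36 h.symm
    have n64 : ¬G.Adj v6 v4 := fun h => n46 h.symm
    have l0 := G.loopless.irrefl v0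
    have l1 := G.loopless.irrefl v1
    have l2 := G.loopless.irrefl v2
    have l3 := G.loopless.irrefl v3
    have l4 := G.loopless.irrefl v4
    have l5 := G.loopless.irrefl v5
    have l6 := G.loopless.irrefl v6
    rcases ha with rfl | rfl | rfl | rfl | rfl | rfl | rfl <;>
      rcases hb with rfl | rfl | rfl | rfl | rfl | rfl | rfl <;> simp_all

variable {r : ℕ}

abbrev PV (r : ℕ) := Fin r ⊕ (Fin r ⊕ (Fin r ⊕ Fin 1))
abbrev pa (i : Fin r) : PV r := Sum.inl i
abbrev pb (i : Fin r) : PV r := Sum.inr (Sum.inl i)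
abbrev pc (i : Fin r) : PV r := Sum.inr (Sum.inr (Sum.inl i))
abbrev px : PV r := Sum.inr (Sum.inr (Sum.inr 0))

def pagAdj : PV r → PV r → Prop
  | Sum.inl i, Sum.inr (Sum.inl j) => i ≠ j
  | Sum.inr (Sum.inl i), Sum.inl j => i ≠ j
  | Sum.inr (Sum.inl i), Sum.inr (Sum.inr (Sum.inl j)) => i ≠ j
  | Sum.inr (Sum.inr (Sum.inl i)), Sum.inr (Sum.inl j) => i ≠ j
  | Sum.inr (Sum.inr (Sum.inl _)), Sum.inr (Sum.inr (Sum.inr _)) => True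
  | Sum.inr (Sum.inr (Sum.inr _)), Sum.inr (Sum.inr (Sum.inl _)) => True
  | _, _ => False

def Pag (r : ℕ) : SimpleGraph (PV r) where
  Adj := pagAdj
  symm := ⟨by
    rintro (i | j | k | u) (i' | j' | k' | u') h <;> simp_all [pagAdj] <;> exact (h ·.symm)⟩
  loopless := ⟨by
    rintro (i | j | k | u) h <;> simp_all [pagAdj]⟩

@[simp] lemma adj_ab {i j : Fin r} : (Pag r).Adj (pa i) (pb j) ↔ i ≠ j := Iff.rfl
@[simp] lemma adj_ba {i j : Fin r} : (Pag r).Adj (pb i) (pa j) ↔ i ≠ j := Iff.rfl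
@[simp] lemma adj_bc {i j : Fin r} : (Pag r).Adj (pb i) (pc j) ↔ i ≠ j := Iff.rfl
@[simp] lemma adj_cb {i j : Fin r} : (Pag r).Adj (pc i) (pb j) ↔ i ≠ j := Iff.rfl
@[simp] lemma adj_cx {i : Fin r} : (Pag r).Adj (pc i) px := trivial
@[simp] lemma adj_xc {i : Fin r} : (Pag r).Adj px (pc i) := trivial
@[simp] lemma adj_aa {i j : Fin r} : ¬ (Pag r).Adj (pa i) (pa j) := fun h => h
@[simp] lemma adj_bb {i j : Fin r} : ¬ (Pag r).Adj (pb i) (pb j) := fun h => h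
@[simp] lemma adj_cc {i j : Fin r} : ¬ (Pag r).Adj (pc i) (pc j) := fun h => h
@[simp] lemma adj_ac {i j : Fin r} : ¬ (Pag r).Adj (pa i) (pc j) := fun h => h
@[simp] lemma adj_ca {i j : Fin r} : ¬ (Pag r).Adj (pc i) (pa j) := fun h => h
@[simp] lemma adj_ax {i : Fin r} : ¬ (Pag r).Adj (pa i) px := fun h => h
@[simp] lemma adj_xa {i : Fin r} : ¬ (Pag r).Adj px (pa i) := fun h => h
@[simp] lemma adj_bx {i : Fin r} : ¬ (Pag r).Adj (pb i) px := fun h => h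
@[simp] lemma adj_xb {i : Fin r} : ¬ (Pag r).Adj px (pb i) := fun h => h
@[simp] lemma adj_xx : ¬ (Pag r).Adj (px (r:=r)) px := fun h => h

example (i j : Fin r) (h : i ≠ j) : (Pag r).Adj (pa i) (pb j) := by simp [h]
example (i j : Fin r) : (pa i : PV r) ≠ pb j := by simp
variable {r : ℕ}

lemma exists_third (hr : 3 ≤ r) (i j : Fin r) : ∃ k : Fin r, k ≠ i ∧ k ≠ j := by
  have hsub : ({i, j} : Finset (Fin r)) ⊆ Finset.univ := Finset.subset_univ _
  have hcard : ({i, j} : Finset (Fin r)).card ≤ 2 :=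
    (Finset.card_insert_le _ _).trans (by simp)
  have h : 0 < (Finset.univ \ ({i, j} : Finset (Fin r))).card := by
    rw [Finset.card_sdiff_of_subset hsub]
    simp only [Finset.card_univ, Fintype.card_fin]
    omega
  obtain ⟨k, hk⟩ := Finset.card_pos.mp h
  simp only [Finset.mem_sdiff, Finset.mem_insert, Finset.mem_singleton] at hk
  exact ⟨k, fun h => hk.2 (Or.inl h), fun h => hk.2 (Or.inr h)⟩

/-- Three given vertices lie on a common induced path. -/
def Cont3 (r : ℕ) (u v w : PV r) : Prop :=
  ∃ (s t : PV r) (p : (Pag r).Walk s t), IsInducedPathW (Pag r) p ∧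
    u ∈ p.support ∧ v ∈ p.support ∧ w ∈ p.support

lemma c3_213 {u v w : PV r} (h : Cont3 r u v w) : Cont3 r v u w := by
  obtain ⟨s, t, p, hp, h1, h2, h3⟩ := h; exact ⟨s, t, p, hp, h2, h1, h3⟩
lemma c3_132 {u v w : PV r} (h : Cont3 r u v w) : Cont3 r u w v := by
  obtain ⟨s, t, p, hp, h1, h2, h3⟩ := h; exact ⟨s, t, p, hp, h1, h3, h2⟩
lemma c3_231 {u v w : PV r} (h : Cont3 r u v w) : Cont3 r v w u := by
  obtain ⟨s, t, p, hp, h1, h2, h3⟩ := h; exact ⟨s, t, p, hp, h2, h3, h1⟩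
lemma c3_312 {u v w : PV r} (h : Cont3 r u v w) : Cont3 r w u v := by
  obtain ⟨s, t, p, hp, h1, h2, h3⟩ := h; exact ⟨s, t, p, hp, h3, h1, h2⟩
lemma c3_321 {u v w : PV r} (h : Cont3 r u v w) : Cont3 r w v u := by
  obtain ⟨s, t, p, hp, h1, h2, h3⟩ := h; exact ⟨s, t, p, hp, h3, h2, h1⟩

lemma caseAAA (hr : 3 ≤ r) (i j k : Fin r) (hij : i ≠ j) (hik : i ≠ k) (hjk : j ≠ k) :
    Cont3 r (pa i) (pa j) (pa k) := by
  have hji := hij.symm; have hki := hik.symm; have hkj := hjk.symm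
  have key : ∃ p : (Pag r).Walk (pa i) (pa k), IsInducedPathW (Pag r) p ∧
      p.support = [pa i, pb k, pa j, pb i, pa k] := by
    apply mkP5 <;> simp_all
  obtain ⟨p, hp, hs⟩ := key
  exact ⟨_, _, p, hp, by simp [hs], by simp [hs], by simp [hs]⟩

lemma caseAAB (hr : 3 ≤ r) (i j k : Fin r) (hij : i ≠ j) :
    Cont3 r (pa i) (pa j) (pb k) := by
  have hji := hij.symm
  rcases eq_or_ne k i with rfl | hki
  ·
    obtain ⟨m, hmi, hmj⟩ := exists_third hr k j
    have him := hmi.symm; have hjm := hmj.symm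
    have key : ∃ p : (Pag r).Walk (pa k) (pb k), IsInducedPathW (Pag r) p ∧
        p.support = [pa k, pb m, pa j, pb k] := by
      apply mkP4 <;> simp_all
    obtain ⟨p, hp, hs⟩ := key
    exact ⟨_, _, p, hp, by simp [hs], by simp [hs], by simp [hs]⟩
  · rcases eq_or_ne k j with rfl | hkj
    · obtain ⟨m, hmi, hmj⟩ := exists_third hr i k
      have him := hmi.symm; have hjm := hmj.symm; have hik := hki.symm
      have key : ∃ p : (Pag r).Walk (pa k) (pb k), IsInducedPathW (Pag r) p ∧
          p.support = [pa k, pb m, pa i, pb k] := by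
        apply mkP4 <;> simp_all
      obtain ⟨p, hp, hs⟩ := key
      exact ⟨_, _, p, hp, by simp [hs], by simp [hs], by simp [hs]⟩
    · have hik := hki.symm; have hjk := hkj.symm
      have key : ∃ p : (Pag r).Walk (pa i) (pa j), IsInducedPathW (Pag r) p ∧
          p.support = [pa i, pb k, pa j] := by
        apply mkP3 <;> simp_all
      obtain ⟨p, hp, hs⟩ := key
      exact ⟨_, _, p, hp, by simp [hs], by simp [hs], by simp [hs]⟩

lemma caseAAC (hr : 3 ≤ r) (i j k : Fin r) (hij : i ≠ j) :
    Cont3 r (pa i) (pa j) (pc k) := by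
  have hji := hij.symm
  rcases eq_or_ne k i with rfl | hki
  · -- P7 : a_j - b_i - c_j - x - c_i - b_j - a_i  (k = i)
    have key : ∃ p : (Pag r).Walk (pa j) (pa k), IsInducedPathW (Pag r) p ∧
        p.support = [pa j, pb k, pc j, px, pc k, pb j, pa k] := by
      apply mkP7 <;> simp_all
    obtain ⟨p, hp, hs⟩ := key
    exact ⟨_, _, p, hp, by simp [hs], by simp [hs], by simp [hs]⟩
  · rcases eq_or_ne k j with rfl | hkj
    · have key : ∃ p : (Pag r).Walk (pa i) (pa k), IsInducedPathW (Pag r) p ∧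
          p.support = [pa i, pb k, pc i, px, pc k, pb i, pa k] := by
        apply mkP7 <;> simp_all
      obtain ⟨p, hp, hs⟩ := key
      exact ⟨_, _, p, hp, by simp [hs], by simp [hs], by simp [hs]⟩
    · have hik := hki.symm; have hjk := hkj.symm
      have key : ∃ p : (Pag r).Walk (pa i) (pa j), IsInducedPathW (Pag r) p ∧
          p.support = [pa i, pb j, pc k, pb i, pa j] := by
        apply mkP5 <;> simp_all
      obtain ⟨p, hp, hs⟩ := key
      exact ⟨_, _, p, hp, by simp [hs], by simp [hs], by simp [hs]⟩

lemma caseAAX (hr : 3 ≤ r) (i j : Fin r) (hij : i ≠ j) :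
    Cont3 r (pa i) (pa j) px := by
  have hji := hij.symm
  obtain ⟨m, hmi, hmj⟩ := exists_third hr i j
  have him := hmi.symm; have hjm := hmj.symm
  have key : ∃ p : (Pag r).Walk (pa i) (px : PV r), IsInducedPathW (Pag r) p ∧
      p.support = [pa i, pb m, pa j, pb i, pc m, px] := by
    apply mkP6 <;> simp_all
  obtain ⟨p, hp, hs⟩ := key
  exact ⟨_, _, p, hp, by simp [hs], by simp [hs], by simp [hs]⟩

lemma caseABB (hr : 3 ≤ r) (i j k : Fin r) (hjk : j ≠ k) :
    Cont3 r (pa i) (pb j) (pb k) := by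
  have hkj := hjk.symm
  rcases eq_or_ne i j with rfl | hij
  · obtain ⟨m, hmi, hmk⟩ := exists_third hr i k
    have him := hmi.symm; have hkm := hmk.symm
    have key : ∃ p : (Pag r).Walk (pb i) (pa i), IsInducedPathW (Pag r) p ∧
        p.support = [pb i, pa m, pb k, pa i] := by
      apply mkP4 <;> simp_all
    obtain ⟨p, hp, hs⟩ := key
    exact ⟨_, _, p, hp, by simp [hs], by simp [hs], by simp [hs]⟩
  · rcases eq_or_ne i k with rfl | hik
    · obtain ⟨m, hmi, hmj⟩ := exists_third hr i j
      have him := hmi.symm; have hjm := hmj.symm; have hji := hij.symm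
      have key : ∃ p : (Pag r).Walk (pb i) (pa i), IsInducedPathW (Pag r) p ∧
          p.support = [pb i, pa m, pb j, pa i] := by
        apply mkP4 <;> simp_all
      obtain ⟨p, hp, hs⟩ := key
      exact ⟨_, _, p, hp, by simp [hs], by simp [hs], by simp [hs]⟩
    · have hji := hij.symm; have hki := hik.symm
      have key : ∃ p : (Pag r).Walk (pb j) (pb k), IsInducedPathW (Pag r) p ∧
          p.support = [pb j, pa i, pb k] := by
        apply mkP3 <;> simp_all
      obtain ⟨p, hp, hs⟩ := key
      exact ⟨_, _, p, hp, by simp [hs], by simp [hs], by simp [hs]⟩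

lemma caseABC (hr : 3 ≤ r) (i j k : Fin r) :
    Cont3 r (pa i) (pb j) (pc k) := by
  rcases eq_or_ne j i with rfl | hji
  · rcases eq_or_ne k j with rfl | hkj
    · -- i = j = k : P6 [pb k, pc m, px, pc k, pb m, pa k]
      obtain ⟨m, hmk, -⟩ := exists_third hr k k
      have hkm := hmk.symm
      have key : ∃ p : (Pag r).Walk (pb k) (pa k), IsInducedPathW (Pag r) p ∧
          p.support = [pb k, pc m, px, pc k, pb m, pa k] := by
        apply mkP6 <;> simp_all
      obtain ⟨p, hp, hs⟩ := key
      exact ⟨_, _, p, hp, by simp [hs], by simp [hs], by simp [hs]⟩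
    · -- i = j ≠ k : P4 [pa j, pb m, pc k, pb j]
      obtain ⟨m, hmj, hmk⟩ := exists_third hr j k
      have hjm := hmj.symm; have hkm := hmk.symm; have hjk := hkj.symm
      have key : ∃ p : (Pag r).Walk (pa j) (pb j), IsInducedPathW (Pag r) p ∧
          p.support = [pa j, pb m, pc k, pb j] := by
        apply mkP4 <;> simp_all
      obtain ⟨p, hp, hs⟩ := key
      exact ⟨_, _, p, hp, by simp [hs], by simp [hs], by simp [hs]⟩
  · rcases eq_or_ne j k with rfl | hjk
    · -- j = k ≠ i : P4 [pc j, pb m, pa i, pb j]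
      obtain ⟨m, hmj, hmi⟩ := exists_third hr j i
      have hjm := hmj.symm; have him := hmi.symm; have hij := hji.symm
      have key : ∃ p : (Pag r).Walk (pc j) (pb j), IsInducedPathW (Pag r) p ∧
          p.support = [pc j, pb m, pa i, pb j] := by
        apply mkP4 <;> simp_all
      obtain ⟨p, hp, hs⟩ := key
      exact ⟨_, _, p, hp, by simp [hs], by simp [hs], by simp [hs]⟩
    · have hij := hji.symm; have hkj := hjk.symm
      have key : ∃ p : (Pag r).Walk (pa i) (pc k), IsInducedPathW (Pag r) p ∧
          p.support = [pa i, pb j, pc k] := by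
        apply mkP3 <;> simp_all
      obtain ⟨p, hp, hs⟩ := key
      exact ⟨_, _, p, hp, by simp [hs], by simp [hs], by simp [hs]⟩

lemma caseABX (hr : 3 ≤ r) (i j : Fin r) :
    Cont3 r (pa i) (pb j) px := by
  rcases eq_or_ne j i with rfl | hji
  · obtain ⟨m, hmj, -⟩ := exists_third hr j j
    have hjm := hmj.symm
    have key : ∃ p : (Pag r).Walk (pb j) (pa j), IsInducedPathW (Pag r) p ∧
        p.support = [pb j, pc m, px, pc j, pb m, pa j] := by
      apply mkP6 <;> simp_all
    obtain ⟨p, hp, hs⟩ := key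
    exact ⟨_, _, p, hp, by simp [hs], by simp [hs], by simp [hs]⟩
  · obtain ⟨m, hmi, hmj⟩ := exists_third hr i j
    have him := hmi.symm; have hjm := hmj.symm; have hij := hji.symm
    have key : ∃ p : (Pag r).Walk (pa i) (px : PV r), IsInducedPathW (Pag r) p ∧
        p.support = [pa i, pb j, pc m, px] := by
      apply mkP4 <;> simp_all
    obtain ⟨p, hp, hs⟩ := key
    exact ⟨_, _, p, hp, by simp [hs], by simp [hs], by simp [hs]⟩

lemma caseACC (hr : 3 ≤ r) (i j k : Fin r) (hjk : j ≠ k) :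
    Cont3 r (pa i) (pc j) (pc k) := by
  have hkj := hjk.symm
  rcases eq_or_ne i j with rfl | hij
  · have key : ∃ p : (Pag r).Walk (pc k) (pa i), IsInducedPathW (Pag r) p ∧
        p.support = [pc k, px, pc i, pb k, pa i] := by
      apply mkP5 <;> simp_all
    obtain ⟨p, hp, hs⟩ := key
    exact ⟨_, _, p, hp, by simp [hs], by simp [hs], by simp [hs]⟩
  · have hji := hij.symm
    have key : ∃ p : (Pag r).Walk (pc j) (pa i), IsInducedPathW (Pag r) p ∧
        p.support = [pc j, px, pc k, pb j, pa i] := by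
      apply mkP5 <;> simp_all
    obtain ⟨p, hp, hs⟩ := key
    exact ⟨_, _, p, hp, by simp [hs], by simp [hs], by simp [hs]⟩

lemma caseACX (hr : 3 ≤ r) (i j : Fin r) :
    Cont3 r (pa i) (pc j) px := by
  obtain ⟨m, hmi, hmj⟩ := exists_third hr i j
  have him := hmi.symm; have hjm := hmj.symm
  have key : ∃ p : (Pag r).Walk (pa i) (px : PV r), IsInducedPathW (Pag r) p ∧
      p.support = [pa i, pb m, pc j, px] := by
    apply mkP4 <;> simp_all
  obtain ⟨p, hp, hs⟩ := key
  exact ⟨_, _, p, hp, by simp [hs], by simp [hs], by simp [hs]⟩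

lemma caseBBB (hr : 3 ≤ r) (i j k : Fin r) (hij : i ≠ j) (hik : i ≠ k) (hjk : j ≠ k) :
    Cont3 r (pb i) (pb j) (pb k) := by
  have hji := hij.symm; have hki := hik.symm; have hkj := hjk.symm
  have key : ∃ p : (Pag r).Walk (pb i) (pb j), IsInducedPathW (Pag r) p ∧
      p.support = [pb i, pa j, pb k, pa i, pb j] := by
    apply mkP5 <;> simp_all
  obtain ⟨p, hp, hs⟩ := key
  exact ⟨_, _, p, hp, by simp [hs], by simp [hs], by simp [hs]⟩

lemma caseBBC (hr : 3 ≤ r) (i j k : Fin r) (hij : i ≠ j) :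
    Cont3 r (pb i) (pb j) (pc k) := by
  have hji := hij.symm
  rcases eq_or_ne k i with rfl | hki
  · obtain ⟨m, hmk, hmj⟩ := exists_third hr k j
    have hkm := hmk.symm; have hjm := hmj.symm
    have key : ∃ p : (Pag r).Walk (pb k) (pc k), IsInducedPathW (Pag r) p ∧
        p.support = [pb k, pa m, pb j, pc k] := by
      apply mkP4 <;> simp_all
    obtain ⟨p, hp, hs⟩ := key
    exact ⟨_, _, p, hp, by simp [hs], by simp [hs], by simp [hs]⟩
  · rcases eq_or_ne k j with rfl | hkj
    · obtain ⟨m, hmk, hmi⟩ := exists_third hr k i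
      have hkm := hmk.symm; have him := hmi.symm; have hik := hki.symm
      have key : ∃ p : (Pag r).Walk (pb k) (pc k), IsInducedPathW (Pag r) p ∧
          p.support = [pb k, pa m, pb i, pc k] := by
        apply mkP4 <;> simp_all
      obtain ⟨p, hp, hs⟩ := key
      exact ⟨_, _, p, hp, by simp [hs], by simp [hs], by simp [hs]⟩
    · have hik := hki.symm; have hjk := hkj.symm
      have key : ∃ p : (Pag r).Walk (pb i) (pb j), IsInducedPathW (Pag r) p ∧
          p.support = [pb i, pc k, pb j] := by
        apply mkP3 <;> simp_all
      obtain ⟨p, hp, hs⟩ := key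
      exact ⟨_, _, p, hp, by simp [hs], by simp [hs], by simp [hs]⟩

lemma caseBBX (hr : 3 ≤ r) (i j : Fin r) (hij : i ≠ j) :
    Cont3 r (pb i) (pb j) px := by
  have hji := hij.symm
  have key : ∃ p : (Pag r).Walk (pb j) (pb i), IsInducedPathW (Pag r) p ∧
      p.support = [pb j, pc i, px, pc j, pb i] := by
    apply mkP5 <;> simp_all
  obtain ⟨p, hp, hs⟩ := key
  exact ⟨_, _, p, hp, by simp [hs], by simp [hs], by simp [hs]⟩

lemma caseBCC (hr : 3 ≤ r) (i j k : Fin r) (hjk : j ≠ k) :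
    Cont3 r (pb i) (pc j) (pc k) := by
  have hkj := hjk.symm
  rcases eq_or_ne i j with rfl | hij
  · have key : ∃ p : (Pag r).Walk (pc i) (pb i), IsInducedPathW (Pag r) p ∧
        p.support = [pc i, px, pc k, pb i] := by
      apply mkP4 <;> simp_all
    obtain ⟨p, hp, hs⟩ := key
    exact ⟨_, _, p, hp, by simp [hs], by simp [hs], by simp [hs]⟩
  · rcases eq_or_ne i k with rfl | hik
    · have hji := hij.symm
      have key : ∃ p : (Pag r).Walk (pc i) (pb i), IsInducedPathW (Pag r) p ∧
          p.support = [pc i, px, pc j, pb i] := by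
        apply mkP4 <;> simp_all
      obtain ⟨p, hp, hs⟩ := key
      exact ⟨_, _, p, hp, by simp [hs], by simp [hs], by simp [hs]⟩
    · have hji := hij.symm; have hki := hik.symm
      have key : ∃ p : (Pag r).Walk (pc j) (pc k), IsInducedPathW (Pag r) p ∧
          p.support = [pc j, pb i, pc k] := by
        apply mkP3 <;> simp_all
      obtain ⟨p, hp, hs⟩ := key
      exact ⟨_, _, p, hp, by simp [hs], by simp [hs], by simp [hs]⟩

lemma caseBCX (hr : 3 ≤ r) (i j : Fin r) :
    Cont3 r (pb i) (pc j) px := by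
  rcases eq_or_ne j i with rfl | hji
  · obtain ⟨m, hmj, -⟩ := exists_third hr j j
    have hjm := hmj.symm
    have key : ∃ p : (Pag r).Walk (pb j) (pc j), IsInducedPathW (Pag r) p ∧
        p.support = [pb j, pc m, px, pc j] := by
      apply mkP4 <;> simp_all
    obtain ⟨p, hp, hs⟩ := key
    exact ⟨_, _, p, hp, by simp [hs], by simp [hs], by simp [hs]⟩
  · have hij := hji.symm
    have key : ∃ p : (Pag r).Walk (pb i) (px : PV r), IsInducedPathW (Pag r) p ∧
        p.support = [pb i, pc j, px] := by
      apply mkP3 <;> simp_all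
    obtain ⟨p, hp, hs⟩ := key
    exact ⟨_, _, p, hp, by simp [hs], by simp [hs], by simp [hs]⟩

lemma caseCCC (hr : 3 ≤ r) (i j k : Fin r) (hij : i ≠ j) (hik : i ≠ k) (hjk : j ≠ k) :
    Cont3 r (pc i) (pc j) (pc k) := by
  have hji := hij.symm; have hki := hik.symm; have hkj := hjk.symm
  have key : ∃ p : (Pag r).Walk (pc i) (pc j), IsInducedPathW (Pag r) p ∧
      p.support = [pc i, pb j, pc k, pb i, pc j] := by
    apply mkP5 <;> simp_all
  obtain ⟨p, hp, hs⟩ := key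
  exact ⟨_, _, p, hp, by simp [hs], by simp [hs], by simp [hs]⟩

lemma caseCCX (hr : 3 ≤ r) (i j : Fin r) (hij : i ≠ j) :
    Cont3 r (pc i) (pc j) px := by
  have hji := hij.symm
  have key : ∃ p : (Pag r).Walk (pc i) (pc j), IsInducedPathW (Pag r) p ∧
      p.support = [pc i, px, pc j] := by
    apply mkP3 <;> simp_all
  obtain ⟨p, hp, hs⟩ := key
  exact ⟨_, _, p, hp, by simp [hs], by simp [hs], by simp [hs]⟩
lemma pag_triple (hr : 3 ≤ r) (u v w : PV r) (huv : u ≠ v) (huw : u ≠ w) (hvw : v ≠ w) :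
    Cont3 r u v w := by
  rcases u with i | i | i | zu <;> rcases v with j | j | j | jv <;> rcases w with k | k | k | kw
  · exact caseAAA hr i j k (by simpa using huv) (by simpa using huw) (by simpa using hvw)
  · exact caseAAB hr i j k (by simpa using huv)
  · exact caseAAC hr i j k (by simpa using huv)
  · obtain rfl : kw = 0 := Subsingleton.elim _ _
    exact caseAAX hr i j (by simpa using huv)
  · exact c3_132 (caseAAB hr i k j (by simpa using huw))
  · exact caseABB hr i j k (by simpa using hvw)
  · exact caseABC hr i j k
  · obtain rfl : kw = 0 := Subsingleton.elim _ _
    exact caseABX hr i j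
  · exact c3_132 (caseAAC hr i k j (by simpa using huw))
  · exact c3_132 (caseABC hr i k j)
  · exact caseACC hr i j k (by simpa using hvw)
  · obtain rfl : kw = 0 := Subsingleton.elim _ _
    exact caseACX hr i j
  · obtain rfl : jv = 0 := Subsingleton.elim _ _
    exact c3_132 (caseAAX hr i k (by simpa using huw))
  · obtain rfl : jv = 0 := Subsingleton.elim _ _
    exact c3_132 (caseABX hr i k)
  · obtain rfl : jv = 0 := Subsingleton.elim _ _
    exact c3_132 (caseACX hr i k)
  · obtain rfl : jv = 0 := Subsingleton.elim _ _
    obtain rfl : kw = 0 := Subsingleton.elim _ _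
    exact absurd rfl hvw
  · exact c3_312 (caseAAB hr j k i (by simpa using hvw))
  · exact c3_213 (caseABB hr j i k (by simpa using huw))
  · exact c3_213 (caseABC hr j i k)
  · obtain rfl : kw = 0 := Subsingleton.elim _ _
    exact c3_213 (caseABX hr j i)
  · exact c3_231 (caseABB hr k i j (by simpa using huv))
  · exact caseBBB hr i j k (by simpa using huv) (by simpa using huw) (by simpa using hvw)
  · exact caseBBC hr i j k (by simpa using huv)
  · obtain rfl : kw = 0 := Subsingleton.elim _ _
    exact caseBBX hr i j (by simpa using huv)
  · exact c3_231 (caseABC hr k i j)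
  · exact c3_132 (caseBBC hr i k j (by simpa using huw))
  · exact caseBCC hr i j k (by simpa using hvw)
  · obtain rfl : kw = 0 := Subsingleton.elim _ _
    exact caseBCX hr i j
  · obtain rfl : jv = 0 := Subsingleton.elim _ _
    exact c3_231 (caseABX hr k i)
  · obtain rfl : jv = 0 := Subsingleton.elim _ _
    exact c3_132 (caseBBX hr i k (by simpa using huw))
  · obtain rfl : jv = 0 := Subsingleton.elim _ _
    exact c3_132 (caseBCX hr i k)
  · obtain rfl : jv = 0 := Subsingleton.elim _ _
    obtain rfl : kw = 0 := Subsingleton.elim _ _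
    exact absurd rfl hvw
  · exact c3_312 (caseAAC hr j k i (by simpa using hvw))
  · exact c3_312 (caseABC hr j k i)
  · exact c3_213 (caseACC hr j i k (by simpa using huw))
  · obtain rfl : kw = 0 := Subsingleton.elim _ _
    exact c3_213 (caseACX hr j i)
  · exact c3_321 (caseABC hr k j i)
  · exact c3_312 (caseBBC hr j k i (by simpa using hvw))
  · exact c3_213 (caseBCC hr j i k (by simpa using huw))
  · obtain rfl : kw = 0 := Subsingleton.elim _ _
    exact c3_213 (caseBCX hr j i)
  · exact c3_231 (caseACC hr k i j (by simpa using huv))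
  · exact c3_231 (caseBCC hr k i j (by simpa using huv))
  · exact caseCCC hr i j k (by simpa using huv) (by simpa using huw) (by simpa using hvw)
  · obtain rfl : kw = 0 := Subsingleton.elim _ _
    exact caseCCX hr i j (by simpa using huv)
  · obtain rfl : jv = 0 := Subsingleton.elim _ _
    exact c3_231 (caseACX hr k i)
  · obtain rfl : jv = 0 := Subsingleton.elim _ _
    exact c3_231 (caseBCX hr k i)
  · obtain rfl : jv = 0 := Subsingleton.elim _ _
    exact c3_132 (caseCCX hr i k (by simpa using huw))
  · obtain rfl : jv = 0 := Subsingleton.elim _ _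
    obtain rfl : kw = 0 := Subsingleton.elim _ _
    exact absurd rfl hvw
  · obtain rfl : zu = 0 := Subsingleton.elim _ _
    exact c3_312 (caseAAX hr j k (by simpa using hvw))
  · obtain rfl : zu = 0 := Subsingleton.elim _ _
    exact c3_312 (caseABX hr j k)
  · obtain rfl : zu = 0 := Subsingleton.elim _ _
    exact c3_312 (caseACX hr j k)
  · obtain rfl : zu = 0 := Subsingleton.elim _ _
    obtain rfl : kw = 0 := Subsingleton.elim _ _
    exact absurd rfl huw
  · obtain rfl : zu = 0 := Subsingleton.elim _ _
    exact c3_321 (caseABX hr k j)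
  · obtain rfl : zu = 0 := Subsingleton.elim _ _
    exact c3_312 (caseBBX hr j k (by simpa using hvw))
  · obtain rfl : zu = 0 := Subsingleton.elim _ _
    exact c3_312 (caseBCX hr j k)
  · obtain rfl : zu = 0 := Subsingleton.elim _ _
    obtain rfl : kw = 0 := Subsingleton.elim _ _
    exact absurd rfl huw
  · obtain rfl : zu = 0 := Subsingleton.elim _ _
    exact c3_321 (caseACX hr k j)
  · obtain rfl : zu = 0 := Subsingleton.elim _ _
    exact c3_321 (caseBCX hr k j)
  · obtain rfl : zu = 0 := Subsingleton.elim _ _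
    exact c3_312 (caseCCX hr j k (by simpa using hvw))
  · obtain rfl : zu = 0 := Subsingleton.elim _ _
    obtain rfl : kw = 0 := Subsingleton.elim _ _
    exact absurd rfl huw
  · obtain rfl : zu = 0 := Subsingleton.elim _ _
    obtain rfl : jv = 0 := Subsingleton.elim _ _
    exact absurd rfl huv
  · obtain rfl : zu = 0 := Subsingleton.elim _ _
    obtain rfl : jv = 0 := Subsingleton.elim _ _
    exact absurd rfl huv
  · obtain rfl : zu = 0 := Subsingleton.elim _ _
    obtain rfl : jv = 0 := Subsingleton.elim _ _
    exact absurd rfl huv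
  · obtain rfl : zu = 0 := Subsingleton.elim _ _
    obtain rfl : jv = 0 := Subsingleton.elim _ _
    obtain rfl : kw = 0 := Subsingleton.elim _ _
    exact absurd rfl huv

section MpGlue

lemma isMpSet_small {V : Type*} [Finite V] (G : SimpleGraph V) (S : Set V)
    (h : S.ncard ≤ 2) : IsMpSet G S :=
  fun _ _ p _ => le_trans (Set.ncard_le_ncard Set.inter_subset_left S.toFinite) h

lemma isGpSet_small {V : Type*} [Finite V] (G : SimpleGraph V) (S : Set V)
    (h : S.ncard ≤ 2) : IsGpSet G S :=
  fun _ _ p _ => le_trans (Set.ncard_le_ncard Set.inter_subset_left S.toFinite) h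

lemma pag_mpSet_le (hr : 3 ≤ r) {S : Set (PV r)} (hS : IsMpSet (Pag r) S) :
    S.ncard ≤ 2 := by
  by_contra h
  push_neg at h
  obtain ⟨T, hTS, hT3⟩ := Set.exists_subset_card_eq (show 3 ≤ S.ncard by omega)
  obtain ⟨u, v, w, huv, huw, hvw, rfl⟩ := Set.ncard_eq_three.mp hT3
  obtain ⟨s, t, p, hp, hu, hv, hw⟩ := pag_triple hr u v w huv huw hvw
  have hsub : ({u, v, w} : Set (PV r)) ⊆ S ∩ {x | x ∈ p.support} := by
    intro y hy
    rcases hy with rfl | rfl | rfl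
    · exact ⟨hTS (by simp), hu⟩
    · exact ⟨hTS (by simp), hv⟩
    · exact ⟨hTS (by simp), hw⟩
  have h3 : 3 ≤ (S ∩ {x | x ∈ p.support}).ncard := by
    rw [← hT3]
    exact Set.ncard_le_ncard hsub (Set.toFinite _)
  have := hS p hp
  omega

lemma pag_mpNum (hr : 3 ≤ r) : mpNum (Pag r) = 2 := by
  have hpos : 0 < r := by omega
  apply IsGreatest.csSup_eq
  constructor
  · refine ⟨{pa ⟨0, hpos⟩, px}, ?_, ?_⟩
    · exact isMpSet_small _ _ (le_of_eq (Set.ncard_pair (by simp)))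
    · exact Set.ncard_pair (by simp)
  · rintro n ⟨S, hS, rfl⟩
    exact pag_mpSet_le hr hS

end MpGlue

section Walks

lemma pag_walk3 (hr : 3 ≤ r) (u v : PV r) :
    ∃ p : (Pag r).Walk u v, p.length ≤ 3 := by
  have W2 : ∀ (a b c : PV r), (Pag r).Adj a b → (Pag r).Adj b c →
      ∃ p : (Pag r).Walk a c, p.length ≤ 3 := fun a b c h1 h2 =>
    ⟨.cons h1 (.cons h2 .nil), by simp⟩
  have W3 : ∀ (a b c d : PV r), (Pag r).Adj a b → (Pag r).Adj b c → (Pag r).Adj c d →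
      ∃ p : (Pag r).Walk a d, p.length ≤ 3 := fun a b c d h1 h2 h3 =>
    ⟨.cons h1 (.cons h2 (.cons h3 .nil)), by simp⟩
  rcases u with i | i | i | z <;> rcases v with j | j | j | z'
  · rcases eq_or_ne i j with rfl | hij
    · exact ⟨.nil, by simp⟩
    · obtain ⟨m, hmi, hmj⟩ := exists_third hr i j
      exact W2 _ (pb m) _ (by simp [Ne.symm hmi]) (by simp [hmj])
  · rcases eq_or_ne i j with rfl | hij
    · obtain ⟨m, hmi, -⟩ := exists_third hr i i
      obtain ⟨m', hm'm, hm'i⟩ := exists_third hr m i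
      exact W3 _ (pb m) (pc m') _ (by simp [Ne.symm hmi]) (by simp [hm'm.symm])
        (by simp [hm'i])
    · exact ⟨.cons (by simp [hij]) .nil, by simp⟩
  · obtain ⟨m, hmi, hmj⟩ := exists_third hr i j
    exact W2 _ (pb m) _ (by simp [Ne.symm hmi]) (by simp [hmj])
  · obtain rfl : z' = 0 := Subsingleton.elim _ _
    obtain ⟨m, hmi, -⟩ := exists_third hr i i
    obtain ⟨m', hm'm, -⟩ := exists_third hr m m
    exact W3 _ (pb m) (pc m') _ (by simp [Ne.symm hmi]) (by simp [hm'm.symm]) (by simp)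
  · rcases eq_or_ne i j with rfl | hij
    · obtain ⟨m, hmi, -⟩ := exists_third hr i i
      obtain ⟨m', hm'm, hm'i⟩ := exists_third hr m i
      exact W3 _ (pa m) (pb m') _ (by simp [Ne.symm hmi]) (by simp [Ne.symm hm'm])
        (by simp [hm'i])
    · exact ⟨.cons (by simp [hij]) .nil, by simp⟩
  · rcases eq_or_ne i j with rfl | hij
    · exact ⟨.nil, by simp⟩
    · obtain ⟨m, hmi, hmj⟩ := exists_third hr i j
      exact W2 _ (pa m) _ (by simp [Ne.symm hmi]) (by simp [hmj])
  · rcases eq_or_ne i j with rfl | hij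
    · obtain ⟨m, hmi, -⟩ := exists_third hr i i
      exact W3 _ (pc m) px _ (by simp [Ne.symm hmi]) (by simp) (by simp)
    · exact ⟨.cons (by simp [hij]) .nil, by simp⟩
  · obtain rfl : z' = 0 := Subsingleton.elim _ _
    obtain ⟨m, hmi, -⟩ := exists_third hr i i
    exact W2 _ (pc m) _ (by simp [Ne.symm hmi]) (by simp)
  · obtain ⟨m, hmj, hmi⟩ := exists_third hr j i
    exact W2 _ (pb m) _ (by simp [Ne.symm hmi]) (by simp [hmj])
  · rcases eq_or_ne i j with rfl | hij
    · obtain ⟨m, hmi, -⟩ := exists_third hr i i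
      exact W3 _ px (pc m) _ (by simp) (by simp) (by simp [hmi])
    · exact ⟨.cons (by simp [hij]) .nil, by simp⟩
  · rcases eq_or_ne i j with rfl | hij
    · exact ⟨.nil, by simp⟩
    · exact W2 _ px _ (by simp) (by simp)
  · obtain rfl : z' = 0 := Subsingleton.elim _ _
    exact ⟨.cons (by simp) .nil, by simp⟩
  · obtain rfl : z = 0 := Subsingleton.elim _ _
    obtain ⟨m, hmj, -⟩ := exists_third hr j j
    obtain ⟨m', hm'm, hm'j⟩ := exists_third hr m j
    exact W3 _ (pc m) (pb m') _ (by simp) (by simp [Ne.symm hm'm]) (by simp [hm'j])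
  · obtain rfl : z = 0 := Subsingleton.elim _ _
    obtain ⟨m, hmj, -⟩ := exists_third hr j j
    exact W2 _ (pc m) _ (by simp) (by simp [hmj])
  · obtain rfl : z = 0 := Subsingleton.elim _ _
    exact ⟨.cons (by simp) .nil, by simp⟩
  · obtain rfl : z' = z := Subsingleton.elim _ _
    exact ⟨.nil, by simp⟩

lemma pag_connected (hr : 3 ≤ r) : (Pag r).Connected := by
  rw [connected_iff]
  refine ⟨fun u v => ?_, ⟨px⟩⟩
  obtain ⟨p, -⟩ := pag_walk3 hr u v
  exact ⟨p⟩

lemma pag_dist_le (hr : 3 ≤ r) (u v : PV r) : (Pag r).dist u v ≤ 3 := by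
  obtain ⟨p, hp⟩ := pag_walk3 hr u v
  exact le_trans (SimpleGraph.dist_le p) hp

end Walks

section GpLower

lemma short_path_two {V : Type*} [Finite V] {G : SimpleGraph V} {u v : V} (p : G.Walk u v)
    (hlen : p.length ≤ 3) (S : Set V)
    (hind : ∀ a ∈ S, ∀ b ∈ S, ¬G.Adj a b) :
    (S ∩ {x | x ∈ p.support}).ncard ≤ 2 := by
  by_contra h
  push_neg at h
  obtain ⟨T, hTS, hT3⟩ := Set.exists_subset_card_eq (show 3 ≤ (S ∩ {x | x ∈ p.support}).ncard by omega)
  obtain ⟨u1, u2, u3, h12, h13, h23, rfl⟩ := Set.ncard_eq_three.mp hT3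
  have m1 := hTS (show u1 ∈ _ by simp)
  have m2 := hTS (show u2 ∈ _ by simp)
  have m3 := hTS (show u3 ∈ _ by simp)
  have n12 := hind u1 m1.1 u2 m2.1
  have n13 := hind u1 m1.1 u3 m3.1
  have n23 := hind u2 m2.1 u3 m3.1
  have n21 := hind u2 m2.1 u1 m1.1
  have n31 := hind u3 m3.1 u1 m1.1
  have n32 := hind u3 m3.1 u2 m2.1
  have s1 : u1 ∈ p.support := m1.2
  have s2 : u2 ∈ p.support := m2.2
  have s3 : u3 ∈ p.support := m3.2
  clear hTS m1 m2 m3 hT3 h hind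
  match p, hlen with
  | .nil, _ =>
    simp only [Walk.support_nil, List.mem_singleton] at s1 s2 s3
    exact h12 (s1.trans s2.symm)
  | .cons h1 .nil, _ =>
    simp only [Walk.support_cons, Walk.support_nil, List.mem_cons,
      List.mem_singleton, List.not_mem_nil, or_false] at s1 s2 s3
    rcases s1 with rfl | rfl <;> rcases s2 with rfl | rfl <;> rcases s3 with rfl | rfl <;>
      simp_all
  | .cons h1 (.cons h2 .nil), _ =>
    simp only [Walk.support_cons, Walk.support_nil, List.mem_cons,
      List.mem_singleton, List.not_mem_nil, or_false] at s1 s2 s3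
    rcases s1 with rfl | rfl | rfl <;> rcases s2 with rfl | rfl | rfl <;>
      rcases s3 with rfl | rfl | rfl <;> simp_all
  | .cons h1 (.cons h2 (.cons h3 .nil)), _ =>
    simp only [Walk.support_cons, Walk.support_nil, List.mem_cons,
      List.mem_singleton, List.not_mem_nil, or_false] at s1 s2 s3
    rcases s1 with rfl | rfl | rfl | rfl <;> rcases s2 with rfl | rfl | rfl | rfl <;>
      rcases s3 with rfl | rfl | rfl | rfl <;> simp_all
  | .cons h1 (.cons h2 (.cons h3 (.cons h4 q))), hlen =>
    simp only [Walk.length_cons] at hlen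
    omega

/-- the general position set `A ∪ C`. -/
def gpS (r : ℕ) : Set (PV r) := Set.range pa ∪ Set.range pc

lemma gpS_indep : ∀ a ∈ gpS r, ∀ b ∈ gpS r, ¬(Pag r).Adj a b := by
  rintro a (⟨i, rfl⟩ | ⟨i, rfl⟩) b (⟨j, rfl⟩ | ⟨j, rfl⟩) <;> simp

lemma gpS_isGpSet (hr : 3 ≤ r) : IsGpSet (Pag r) (gpS r) := by
  intro u v p hp
  have hlen : p.length ≤ 3 := hp.2.trans_le (pag_dist_le hr u v)
  exact short_path_two p hlen _ gpS_indep

lemma gpS_ncard : (gpS r).ncard = 2 * r := by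
  have hd : Disjoint (Set.range (pa (r := r))) (Set.range pc) := by
    rw [Set.disjoint_left]
    rintro a ⟨i, rfl⟩ ⟨j, hj⟩
    simp at hj
  have h1 : (Set.range (pa (r := r))).ncard = r := by
    rw [← Set.image_univ, Set.ncard_image_of_injective _ (fun a b h => by simpa using h),
      Set.ncard_univ, Nat.card_eq_fintype_card, Fintype.card_fin]
  have h2 : (Set.range (pc (r := r))).ncard = r := by
    rw [← Set.image_univ, Set.ncard_image_of_injective _ (fun a b h => by simpa using h),
      Set.ncard_univ, Nat.card_eq_fintype_card, Fintype.card_fin]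
  rw [gpS, Set.ncard_union_eq hd (Set.toFinite _) (Set.toFinite _), h1, h2]
  omega

end GpLower

section GpUpper

lemma ncard_range_pa : (Set.range (pa (r := r))).ncard = r := by
  rw [← Set.image_univ, Set.ncard_image_of_injective _ (fun a b h => by simpa using h),
    Set.ncard_univ, Nat.card_eq_fintype_card, Fintype.card_fin]

lemma ncard_range_pb : (Set.range (pb (r := r))).ncard = r := by
  rw [← Set.image_univ, Set.ncard_image_of_injective _ (fun a b h => by simpa using h),
    Set.ncard_univ, Nat.card_eq_fintype_card, Fintype.card_fin]

lemma ncard_range_pc : (Set.range (pc (r := r))).ncard = r := by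
  rw [← Set.image_univ, Set.ncard_image_of_injective _ (fun a b h => by simpa using h),
    Set.ncard_univ, Nat.card_eq_fintype_card, Fintype.card_fin]

lemma card_le_four {α : Type*} (a b c d : α) : ({a, b, c, d} : Set α).ncard ≤ 4 := by
  refine (Set.ncard_insert_le _ _).trans ?_
  refine Nat.add_le_add_right ((Set.ncard_insert_le _ _).trans ?_) 1
  refine Nat.add_le_add_right ((Set.ncard_insert_le _ _).trans ?_) 1
  simp [Set.ncard_singleton]

lemma card_le_five {α : Type*} (a b c d e : α) : ({a, b, c, d, e} : Set α).ncard ≤ 5 := by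
  refine (Set.ncard_insert_le _ _).trans ?_
  exact Nat.add_le_add_right (card_le_four b c d e) 1

lemma pag_p3free_le (hr : 3 ≤ r) {S : Set (PV r)}
    (hP3 : ∀ z u w, z ∈ S → u ∈ S → w ∈ S → (Pag r).Adj z u → (Pag r).Adj z w → u ≠ w →
      (Pag r).Adj u w) : S.ncard ≤ 2 * r := by
  by_cases h3b : ∃ i k l : Fin r, i ≠ k ∧ i ≠ l ∧ k ≠ l ∧ pb i ∈ S ∧ pb k ∈ S ∧ pb l ∈ S
  · obtain ⟨i, k, l, hik, hil, hkl, hbi, hbk, hbl⟩ := h3b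
    have hsub : S ⊆ Set.range pb ∪ {px} := by
      rintro (j | j | j | z) hj
      · exfalso
        rcases eq_or_ne j i with rfl | hji
        · exact adj_bb (hP3 (pa j) (pb k) (pb l) hj hbk hbl (by simp [hik])
            (by simp [hil]) (by simp [hkl]))
        · rcases eq_or_ne j k with rfl | hjk
          · exact adj_bb (hP3 (pa j) (pb i) (pb l) hj hbi hbl (by simp [hji])
              (by simp [hkl]) (by simp [hil]))
          · exact adj_bb (hP3 (pa j) (pb i) (pb k) hj hbi hbk (by simp [hji])
              (by simp [hjk]) (by simp [hik]))
      · exact Or.inl ⟨j, rfl⟩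
      · exfalso
        rcases eq_or_ne j i with rfl | hji
        · exact adj_bb (hP3 (pc j) (pb k) (pb l) hj hbk hbl (by simp [hik])
            (by simp [hil]) (by simp [hkl]))
        · rcases eq_or_ne j k with rfl | hjk
          · exact adj_bb (hP3 (pc j) (pb i) (pb l) hj hbi hbl (by simp [hji])
              (by simp [hkl]) (by simp [hil]))
          · exact adj_bb (hP3 (pc j) (pb i) (pb k) hj hbi hbk (by simp [hji])
              (by simp [hjk]) (by simp [hik]))
      · right
        obtain rfl : z = 0 := Subsingleton.elim _ _
        rfl
    calc S.ncard ≤ (Set.range pb ∪ {px} : Set (PV r)).ncard :=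
          Set.ncard_le_ncard hsub (Set.toFinite _)
      _ ≤ (Set.range (pb (r := r))).ncard + ({px} : Set (PV r)).ncard := Set.ncard_union_le _ _
      _ ≤ r + 1 := by rw [ncard_range_pb, Set.ncard_singleton]
      _ ≤ 2 * r := by omega
  · push_neg at h3b
    by_cases h2b : ∃ i k : Fin r, i ≠ k ∧ pb i ∈ S ∧ pb k ∈ S
    · obtain ⟨i, k, hik, hbi, hbk⟩ := h2b
      have hbsub : ∀ m, pb m ∈ S → m = i ∨ m = k := by
        intro m hm
        by_contra hc
        push_neg at hc
        exact h3b i k m hik hc.1.symm hc.2.symm hbi hbk hm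
      have hasub : ∀ j, pa j ∈ S → j = i ∨ j = k := by
        intro j hj
        by_contra hc
        push_neg at hc
        exact adj_bb (hP3 (pa j) (pb i) (pb k) hj hbi hbk (by simp [hc.1])
          (by simp [hc.2]) (by simp [hik]))
      have hcsub : ∀ j, pc j ∈ S → j = i ∨ j = k := by
        intro j hj
        by_contra hc
        push_neg at hc
        exact adj_bb (hP3 (pc j) (pb i) (pb k) hj hbi hbk (by simp [hc.1])
          (by simp [hc.2]) (by simp [hik]))
      by_cases hx : px ∈ S
      · have hnc : ∀ j, pc j ∈ S → False := by
          intro j hj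
          rcases hcsub j hj with rfl | rfl
          · exact adj_xb (hP3 (pc j) px (pb k) hj hx hbk (by simp) (by simp [hik])
              (by simp))
          · exact adj_xb (hP3 (pc j) px (pb i) hj hx hbi (by simp) (by simp [Ne.symm hik])
              (by simp))
        have hsub : S ⊆ {pb i, pb k, pa i, pa k, px} := by
          rintro (j | j | j | z) hj
          · rcases hasub j hj with rfl | rfl <;> simp
          · rcases hbsub j hj with rfl | rfl <;> simp
          · exact absurd hj (fun h => hnc j h)
          · obtain rfl : z = 0 := Subsingleton.elim _ _
            simp [px]
        exact le_trans (le_trans (Set.ncard_le_ncard hsub (Set.toFinite _))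
          (card_le_five _ _ _ _ _)) (by omega)
      · by_cases hai : pa i ∈ S
        · have hnci : pc i ∉ S := by
            intro hci
            exact adj_ac (hP3 (pb k) (pa i) (pc i) hbk hai hci (by simp [Ne.symm hik])
              (by simp [Ne.symm hik]) (by simp))
          have hsub : S ⊆ {pb i, pb k, pa i, pa k, pc k} := by
            rintro (j | j | j | z) hj
            · rcases hasub j hj with rfl | rfl <;> simp
            · rcases hbsub j hj with rfl | rfl <;> simp
            · rcases hcsub j hj with rfl | rfl
              · exact absurd hj hnci
              · simp
            · obtain rfl : z = 0 := Subsingleton.elim _ _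
              exact absurd hj hx
          exact le_trans (le_trans (Set.ncard_le_ncard hsub (Set.toFinite _))
            (card_le_five _ _ _ _ _)) (by omega)
        · have hsub : S ⊆ {pb i, pb k, pa k, pc i, pc k} := by
            rintro (j | j | j | z) hj
            · rcases hasub j hj with rfl | rfl
              · exact absurd hj hai
              · simp
            · rcases hbsub j hj with rfl | rfl <;> simp
            · rcases hcsub j hj with rfl | rfl <;> simp
            · obtain rfl : z = 0 := Subsingleton.elim _ _
              exact absurd hj hx
          exact le_trans (le_trans (Set.ncard_le_ncard hsub (Set.toFinite _))
            (card_le_five _ _ _ _ _)) (by omega)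
    · push_neg at h2b
      by_cases h1b : ∃ i, pb i ∈ S
      · obtain ⟨i, hbi⟩ := h1b
        have hbonly : ∀ m, pb m ∈ S → m = i := by
          intro m hm
          by_contra hc
          exact absurd hm (h2b i m (Ne.symm hc) hbi)
        by_cases hA : ∃ j, j ≠ i ∧ pa j ∈ S
        · obtain ⟨j, hji, haj⟩ := hA
          have hasub : ∀ m, pa m ∈ S → m = i ∨ m = j := by
            intro m hm
            by_contra hc
            push_neg at hc
            exact adj_aa (hP3 (pb i) (pa j) (pa m) hbi haj hm (by simp [Ne.symm hji])
              (by simp [hc.1.symm]) (by simp [hc.2.symm]))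
          have hcsub : ∀ m, pc m ∈ S → m = i := by
            intro m hm
            by_contra hc
            exact adj_ac (hP3 (pb i) (pa j) (pc m) hbi haj hm (by simp [Ne.symm hji])
              (by simp [Ne.symm hc]) (by simp))
          have hsub : S ⊆ {pb i, pa i, pa j, pc i, px} := by
            rintro (m | m | m | z) hm
            · rcases hasub m hm with rfl | rfl <;> simp
            · rw [hbonly m hm]; simp
            · rw [hcsub m hm]; simp
            · obtain rfl : z = 0 := Subsingleton.elim _ _
              simp [px]
          exact le_trans (le_trans (Set.ncard_le_ncard hsub (Set.toFinite _))
            (card_le_five _ _ _ _ _)) (by omega)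
        · push_neg at hA
          by_cases hC : ∃ j, j ≠ i ∧ pc j ∈ S
          · obtain ⟨j, hji, hcj⟩ := hC
            have hcsub : ∀ m, pc m ∈ S → m = i ∨ m = j := by
              intro m hm
              by_contra hc
              push_neg at hc
              exact adj_cc (hP3 (pb i) (pc j) (pc m) hbi hcj hm (by simp [Ne.symm hji])
                (by simp [hc.1.symm]) (by simp [hc.2.symm]))
            have hsub : S ⊆ {pb i, pa i, pc i, pc j, px} := by
              rintro (m | m | m | z) hm
              · have := hA m
                rcases eq_or_ne m i with rfl | hmi
                · simp
                · exact absurd hm (this hmi)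
              · rw [hbonly m hm]; simp
              · rcases hcsub m hm with rfl | rfl <;> simp
              · obtain rfl : z = 0 := Subsingleton.elim _ _
                simp [px]
            exact le_trans (le_trans (Set.ncard_le_ncard hsub (Set.toFinite _))
              (card_le_five _ _ _ _ _)) (by omega)
          · push_neg at hC
            have hsub : S ⊆ {pb i, pa i, pc i, px} := by
              rintro (m | m | m | z) hm
              · rcases eq_or_ne m i with rfl | hmi
                · simp
                · exact absurd hm (hA m hmi)
              · rw [hbonly m hm]; simp
              · rcases eq_or_ne m i with rfl | hmi
                · simp
                · exact absurd hm (hC m hmi)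
              · obtain rfl : z = 0 := Subsingleton.elim _ _
                simp [px]
            exact le_trans (le_trans (Set.ncard_le_ncard hsub (Set.toFinite _))
              (card_le_four _ _ _ _)) (by omega)
      · push_neg at h1b
        by_cases hx : px ∈ S
        · by_cases hC : ∃ j, pc j ∈ S
          · obtain ⟨j, hcj⟩ := hC
            have hconly : ∀ m, pc m ∈ S → m = j := by
              intro m hm
              by_contra hc
              exact adj_cc (hP3 px (pc j) (pc m) hx hcj hm (by simp) (by simp)
                (by simp [Ne.symm hc]))
            have hsub : S ⊆ Set.range pa ∪ {pc j, px} := by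
              rintro (m | m | m | z) hm
              · exact Or.inl ⟨m, rfl⟩
              · exact absurd hm (h1b m)
              · rw [hconly m hm]; simp
              · obtain rfl : z = 0 := Subsingleton.elim _ _
                simp [px]
            calc S.ncard ≤ (Set.range pa ∪ {pc j, px} : Set (PV r)).ncard :=
                  Set.ncard_le_ncard hsub (Set.toFinite _)
              _ ≤ (Set.range (pa (r := r))).ncard + ({pc j, px} : Set (PV r)).ncard :=
                  Set.ncard_union_le _ _
              _ ≤ r + 2 := by
                  rw [ncard_range_pa]
                  exact Nat.add_le_add_left ((Set.ncard_insert_le _ _).trans (by simp)) r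
              _ ≤ 2 * r := by omega
          · push_neg at hC
            have hsub : S ⊆ Set.range pa ∪ {px} := by
              rintro (m | m | m | z) hm
              · exact Or.inl ⟨m, rfl⟩
              · exact absurd hm (h1b m)
              · exact absurd hm (hC m)
              · obtain rfl : z = 0 := Subsingleton.elim _ _
                simp [px]
            calc S.ncard ≤ (Set.range pa ∪ {px} : Set (PV r)).ncard :=
                  Set.ncard_le_ncard hsub (Set.toFinite _)
              _ ≤ (Set.range (pa (r := r))).ncard + ({px} : Set (PV r)).ncard :=
                  Set.ncard_union_le _ _
              _ ≤ r + 1 := by rw [ncard_range_pa, Set.ncard_singleton]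
              _ ≤ 2 * r := by omega
        · have hsub : S ⊆ Set.range pa ∪ Set.range pc := by
            rintro (m | m | m | z) hm
            · exact Or.inl ⟨m, rfl⟩
            · exact absurd hm (h1b m)
            · exact Or.inr ⟨m, rfl⟩
            · obtain rfl : z = 0 := Subsingleton.elim _ _
              exact absurd hm hx
          calc S.ncard ≤ (Set.range pa ∪ Set.range pc : Set (PV r)).ncard :=
                Set.ncard_le_ncard hsub (Set.toFinite _)
            _ ≤ (Set.range (pa (r := r))).ncard + (Set.range (pc (r := r))).ncard :=
                Set.ncard_union_le _ _
            _ ≤ 2 * r := by rw [ncard_range_pa, ncard_range_pc]; omega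

end GpUpper

lemma pag_gpSet_le (hr : 3 ≤ r) {S : Set (PV r)} (hS : IsGpSet (Pag r) S) :
    S.ncard ≤ 2 * r := by
  apply pag_p3free_le hr
  intro z u w hz hu hw hzu hzw huw
  by_contra hnadj
  -- the walk u - z - w is a geodesic
  have hq : (Pag r).Walk u w := .cons hzu.symm (.cons hzw .nil)
  have hdist : (Pag r).dist u w = 2 := by
    have h2 : (Pag r).dist u w ≤ 2 := by
      have := SimpleGraph.dist_le (Walk.cons hzu.symm (Walk.cons hzw .nil))
      simpa using this
    have h0 : (Pag r).dist u w ≠ 0 := by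
      intro h
      have hreach : (Pag r).Reachable u w := ⟨.cons hzu.symm (.cons hzw .nil)⟩
      exact huw (hreach.dist_eq_zero_iff.mp h)
    have h1 : (Pag r).dist u w ≠ 1 := fun h => hnadj (SimpleGraph.dist_eq_one_iff_adj.mp h)
    omega
  have hpath : (Walk.cons hzu.symm (Walk.cons hzw (.nil : (Pag r).Walk w w))).IsPath := by
    rw [Walk.isPath_def]
    simp [hzu.ne, hzu.ne', hzw.ne, huw]
  have hgeo : IsGeodesicW (Pag r) (Walk.cons hzu.symm (Walk.cons hzw (.nil : (Pag r).Walk w w))) :=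
    ⟨hpath, by simp [hdist]⟩
  have hcard := hS _ hgeo
  have hsub : ({u, z, w} : Set (PV r)) ⊆ S ∩
      {x | x ∈ (Walk.cons hzu.symm (Walk.cons hzw (.nil : (Pag r).Walk w w))).support} := by
    rintro y (rfl | rfl | rfl)
    · exact ⟨hu, by simp⟩
    · exact ⟨hz, by simp⟩
    · exact ⟨hw, by simp⟩
  have h3 : ({u, z, w} : Set (PV r)).ncard = 3 :=
    Set.ncard_eq_three.mpr ⟨u, z, w, hzu.ne.symm, huw, hzw.ne, rfl⟩
  have hge := Set.ncard_le_ncard hsub (Set.toFinite _)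
  rw [h3] at hge
  omega

lemma pag_gpNum (hr : 3 ≤ r) : gpNum (Pag r) = 2 * r := by
  apply IsGreatest.csSup_eq
  constructor
  · exact ⟨gpS r, gpS_isGpSet hr, gpS_ncard⟩
  · rintro n ⟨S, hS, rfl⟩
    exact pag_gpSet_le hr hS
section Transfer
open SimpleGraph

variable {V : Type*} {W : Type*} {G : SimpleGraph V} {H : SimpleGraph W}

lemma iso_dist_le (f : G ≃g H) (u v : V) : H.dist (f u) (f v) ≤ G.dist u v := by
  by_cases hreach : G.Reachable u v
  · obtain ⟨p, hp⟩ := hreach.exists_walk_length_eq_dist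
    calc H.dist (f u) (f v) ≤ (p.map f.toHom).length := SimpleGraph.dist_le _
      _ = G.dist u v := by rw [Walk.length_map, hp]
  · have h2 : ¬H.Reachable (f u) (f v) := fun h => hreach (Iso.reachable_iff.mp h)
    rw [SimpleGraph.dist_eq_zero_of_not_reachable h2]
    exact Nat.zero_le _

lemma iso_dist (f : G ≃g H) (u v : V) : H.dist (f u) (f v) = G.dist u v := by
  refine le_antisymm (iso_dist_le f u v) ?_
  have := iso_dist_le f.symm (f u) (f v)
  simpa using this

lemma sym2_map_inj {f : V → W} (hf : Function.Injective f) {a b : V} {e : Sym2 V}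
    (h : Sym2.map f e = s(f a, f b)) : e = s(a, b) := by
  induction e with
  | _ x y =>
    simp only [Sym2.map_pair_eq, Sym2.eq, Sym2.rel_iff', Prod.mk.injEq, Prod.swap_prod_mk] at h ⊢
    rcases h with ⟨h1, h2⟩ | ⟨h1, h2⟩
    · exact Or.inl ⟨hf h1, hf h2⟩
    · exact Or.inr ⟨hf h1, hf h2⟩

lemma isInducedPathW_map (f : G ≃g H) {u v : V} (p : G.Walk u v) (h : IsInducedPathW G p) :
    IsInducedPathW H (p.map f.toHom) := by
  obtain ⟨hp, hadj⟩ := h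
  refine ⟨Walk.map_isPath_of_injective f.injective hp, ?_⟩
  intro a b ha hb
  rw [Walk.support_map] at ha hb
  obtain ⟨a', ha', rfl⟩ := List.mem_map.mp ha
  obtain ⟨b', hb', rfl⟩ := List.mem_map.mp hb
  rw [toSubgraph_adj_iff_edges, Walk.edges_map]
  have hmain : G.Adj a' b' ↔ s(a', b') ∈ p.edges := by
    rw [hadj a' b' ha' hb', toSubgraph_adj_iff_edges]
  constructor
  · intro hadj'
    have hG : G.Adj a' b' := f.map_adj_iff.mp hadj'
    exact List.mem_map.mpr ⟨_, hmain.mp hG, by rw [Sym2.map_pair_eq]⟩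
  · intro he
    obtain ⟨e, he', heq⟩ := List.mem_map.mp he
    have he2 : e = s(a', b') := sym2_map_inj f.injective heq
    subst he2
    exact f.map_adj_iff.mpr (hmain.mpr he')

lemma isGeodesicW_map (f : G ≃g H) {u v : V} (p : G.Walk u v) (h : IsGeodesicW G p) :
    IsGeodesicW H (p.map f.toHom) := by
  obtain ⟨hp, hlen⟩ := h
  refine ⟨Walk.map_isPath_of_injective f.injective hp, ?_⟩
  rw [Walk.length_map]
  exact hlen.trans (iso_dist f u v).symm

lemma inter_support_map (f : G ≃g H) (S : Set V) {u v : V} (p : G.Walk u v) :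
    (f '' S ∩ {x | x ∈ (p.map f.toHom).support}) = f '' (S ∩ {x | x ∈ p.support}) := by
  ext y
  simp only [Set.mem_inter_iff, Set.mem_image, Set.mem_setOf_eq, Walk.support_map,
    List.mem_map]
  constructor
  · rintro ⟨⟨a, haS, rfl⟩, ⟨b, hb, hab⟩⟩
    exact ⟨a, ⟨haS, by rwa [← f.injective hab]⟩, rfl⟩
  · rintro ⟨a, ⟨haS, ha⟩, rfl⟩
    exact ⟨⟨a, haS, rfl⟩, ⟨a, ha, rfl⟩⟩

lemma IsMpSet.image (f : G ≃g H) {S : Set V} (h : IsMpSet G S) : IsMpSet H (f '' S) := by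
  intro u v q hq
  have hq' := isInducedPathW_map f.symm q hq
  have hcount := h _ hq'
  have hset := inter_support_map f.symm (f '' S) q
  have himg : f.symm '' (f '' S) = S := by
    rw [← Set.image_comp]
    have hid : (⇑f.symm ∘ ⇑f) = id := by funext x; simp
    rw [hid, Set.image_id]
  rw [himg] at hset
  calc (f '' S ∩ {x | x ∈ q.support}).ncard
      = (f.symm '' (f '' S ∩ {x | x ∈ q.support})).ncard :=
        (Set.ncard_image_of_injective _ f.symm.injective).symm
    _ = (S ∩ {x | x ∈ (q.map f.symm.toHom).support}).ncard := by rw [hset]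
    _ ≤ 2 := hcount

lemma IsGpSet.image (f : G ≃g H) {S : Set V} (h : IsGpSet G S) : IsGpSet H (f '' S) := by
  intro u v q hq
  have hq' := isGeodesicW_map f.symm q hq
  have hcount := h _ hq'
  have hset := inter_support_map f.symm (f '' S) q
  have himg : f.symm '' (f '' S) = S := by
    rw [← Set.image_comp]
    have hid : (⇑f.symm ∘ ⇑f) = id := by funext x; simp
    rw [hid, Set.image_id]
  rw [himg] at hset
  calc (f '' S ∩ {x | x ∈ q.support}).ncard
      = (f.symm '' (f '' S ∩ {x | x ∈ q.support})).ncard :=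
        (Set.ncard_image_of_injective _ f.symm.injective).symm
    _ = (S ∩ {x | x ∈ (q.map f.symm.toHom).support}).ncard := by rw [hset]
    _ ≤ 2 := hcount

lemma mpNum_congr (f : G ≃g H) : mpNum G = mpNum H := by
  unfold mpNum
  congr 1
  ext n
  constructor
  · rintro ⟨S, hS, rfl⟩
    exact ⟨f '' S, hS.image f, (Set.ncard_image_of_injective _ f.injective)⟩
  · rintro ⟨S, hS, rfl⟩
    exact ⟨f.symm '' S, hS.image f.symm, (Set.ncard_image_of_injective _ f.symm.injective)⟩

lemma gpNum_congr (f : G ≃g H) : gpNum G = gpNum H := by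
  unfold gpNum
  congr 1
  ext n
  constructor
  · rintro ⟨S, hS, rfl⟩
    exact ⟨f '' S, hS.image f, (Set.ncard_image_of_injective _ f.injective)⟩
  · rintro ⟨S, hS, rfl⟩
    exact ⟨f.symm '' S, hS.image f.symm, (Set.ncard_image_of_injective _ f.symm.injective)⟩

end Transfer
def pagEquiv (r : ℕ) : PV r ≃ Fin (3 * r + 1) :=
  ((Equiv.sumCongr (Equiv.refl (Fin r))
    ((Equiv.sumCongr (Equiv.refl (Fin r)) finSumFinEquiv).trans finSumFinEquiv)).trans
      finSumFinEquiv).trans (finCongr (by ring))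

def PagF (r : ℕ) : SimpleGraph (Fin (3 * r + 1)) where
  Adj a b := (Pag r).Adj ((pagEquiv r).symm a) ((pagEquiv r).symm b)
  symm := ⟨fun a b h => (Pag r).adj_symm h⟩
  loopless := ⟨fun a h => (Pag r).loopless.irrefl _ h⟩

def pagIso (r : ℕ) : PagF r ≃g Pag r := ⟨(pagEquiv r).symm, Iff.rfl⟩

theorem exists_graph_mp_two_gp_double (r : ℕ) (hr : 3 ≤ r) :
    ∃ G : SimpleGraph (Fin (3 * r + 1)), G.Connected ∧ mpNum G = 2 ∧ gpNum G = 2 * r :=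
  ⟨PagF r, (pagIso r).connected_iff.mpr (pag_connected hr),
    (mpNum_congr (pagIso r)).trans (pag_mpNum hr),
    (gpNum_congr (pagIso r)).trans (pag_gpNum hr)⟩
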